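/- Let h : 𝔻 → ℝ be a nonnegative harmonic function on the unit disk satisfying h(conj λ) = h(λ). Then for all y ∈ (-1,1): (1-y²)/(1+y²) · h(0) ≤ h(iy) ≤ (1+y²)/(1-y²) · h(0). -/

import Mathlib

open Complex Metric

/-- A real-valued function on the open unit disk is harmonic iff it is the real part of a
holomorphic function there (the disk is simply connected). -/
def IsHarmonicOnDisk (h : ℂ → ℝ) : Prop :=
  ∃ F : ℂ → ℂ, DifferentiableOn ℂ F (ball (0 : ℂ) 1) ∧
    ∀ z ∈ ball (0 : ℂ) 1, h z = (F z).re


lemma schwarz_unit {f : ℂ → ℂ} (hf : DifferentiableOn ℂ f (ball (0:ℂ) 1))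
    (h0 : f 0 = 0) (hb : ∀ z ∈ ball (0:ℂ) 1, ‖f z‖ ≤ 1)
    {z : ℂ} (hz : z ∈ ball (0:ℂ) 1) : ‖dslope f 0 z‖ ≤ 1 := by
  refine le_of_forall_pos_le_add (fun ε hε => ?_)
  have hmaps : Set.MapsTo f (ball (0:ℂ) 1) (ball (f 0) (1+ε)) := by
    intro x hx
    rw [h0]
    exact mem_ball_zero_iff.2 (lt_of_le_of_lt (hb x hx) (by linarith))
  have := Complex.norm_dslope_le_div_of_mapsTo_ball hf (hmaps.mono_right ball_subset_closedBall) hz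
  simpa using this

lemma harnack_aux {Φ : ℂ → ℂ} {A : ℝ} (hΦ : DifferentiableOn ℂ Φ (ball (0:ℂ) 1))
    (heven : ∀ z, Φ (-z) = Φ z) (hre : ∀ z ∈ ball (0:ℂ) 1, 0 ≤ (Φ z).re)
    (hΦ0 : Φ 0 = (A : ℂ)) (hA : 0 < A) {w : ℂ} (hw : w ∈ ball (0:ℂ) 1) :
    ‖Φ w - A‖ ≤ (‖w‖)^2 * ‖Φ w + A‖ := by
  set ψ : ℂ → ℂ := fun z => (Φ z - A) / (Φ z + A) with hψdef
  have hden : ∀ z ∈ ball (0:ℂ) 1, Φ z + A ≠ 0 := by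
    intro z hz h
    have h1 : (Φ z + A).re = (Φ z).re + A := by simp
    rw [h] at h1
    have := hre z hz
    simp at h1
    linarith
  have hψd : DifferentiableOn ℂ ψ (ball (0:ℂ) 1) :=
    (hΦ.sub (differentiableOn_const _)).div (hΦ.add (differentiableOn_const _)) hden
  have hψ0 : ψ 0 = 0 := by simp [hψdef, hΦ0]
  have hψle : ∀ z ∈ ball (0:ℂ) 1, ‖ψ z‖ ≤ 1 := by
    intro z hz
    have hnum : ‖Φ z - A‖ ≤ ‖Φ z + A‖ := by
      have h1 : ‖Φ z - A‖ ^ 2 ≤ ‖Φ z + A‖ ^ 2 := by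
        rw [Complex.sq_norm, Complex.sq_norm, Complex.normSq_apply, Complex.normSq_apply]
        simp only [Complex.sub_re, Complex.sub_im, Complex.add_re, Complex.add_im,
          Complex.ofReal_re, Complex.ofReal_im]
        have := hre z hz
        nlinarith
      nlinarith [norm_nonneg (Φ z - A), norm_nonneg (Φ z + A)]
    rw [hψdef]
    simp only [norm_div]
    exact div_le_one_of_le₀ hnum (norm_nonneg _)
  have hψeven : ∀ z, ψ (-z) = ψ z := fun z => by simp [hψdef, heven]
  set g : ℂ → ℂ := dslope ψ 0 with hgdef
  have hgd : DifferentiableOn ℂ g (ball (0:ℂ) 1) :=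
    (Complex.differentiableOn_dslope (ball_mem_nhds _ one_pos)).mpr hψd
  have hgle : ∀ z ∈ ball (0:ℂ) 1, ‖g z‖ ≤ 1 :=
    fun z hz => schwarz_unit hψd hψ0 hψle hz
  have hg0 : g 0 = 0 := by
    have hψfun : (fun x => ψ (-x)) = ψ := funext hψeven
    have hd : deriv ψ 0 = -deriv ψ 0 := by
      conv_lhs => rw [← hψfun]
      rw [deriv_comp_neg]
      simp
    have hd0 : deriv ψ 0 = 0 := by linear_combination hd / 2
    rw [hgdef, dslope_same, hd0]
  have hGle : ∀ z ∈ ball (0:ℂ) 1, ‖dslope g 0 z‖ ≤ 1 :=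
    fun z hz => schwarz_unit hgd hg0 hgle hz
  have h1 : ψ w = w * g w := by
    have := sub_smul_dslope ψ 0 w
    simp only [sub_zero, smul_eq_mul, hψ0] at this
    rw [hgdef]; exact this.symm
  have h2 : g w = w * dslope g 0 w := by
    have := sub_smul_dslope g 0 w
    simp only [sub_zero, smul_eq_mul, hg0] at this
    exact this.symm
  have habs : ‖ψ w‖ ≤ (‖w‖)^2 := by
    rw [h1, h2, norm_mul, norm_mul]
    nlinarith [hGle w hw, norm_nonneg w, norm_nonneg (dslope g 0 w)]
  have hψw : ‖ψ w‖ = ‖Φ w - A‖ / ‖Φ w + A‖ := by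
    rw [hψdef]; simp [norm_div]
  rw [hψw] at habs
  have hd := hden w hw
  rw [div_le_iff₀ (norm_pos_iff.mpr hd)] at habs
  exact habs
lemma harnack_num {x a s t : ℝ} (hx : 0 ≤ x) (ha : 0 ≤ a) (ht0 : 0 ≤ t) (ht1 : t < 1)
    (hfin : (x - a)^2 + s^2 ≤ t^2 * ((x + a)^2 + s^2)) :
    (1 - t) / (1 + t) * a ≤ x ∧ x ≤ (1 + t) / (1 - t) * a := by
  have ht2 : (0:ℝ) ≤ 1 - t^2 := by nlinarith
  have h5 : (x - a)^2 ≤ (t * (x + a))^2 := by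
    nlinarith [hfin, mul_nonneg ht2 (sq_nonneg s)]
  have h6 : 0 ≤ t * (x + a) := by positivity
  constructor
  · rw [div_mul_eq_mul_div, div_le_iff₀ (by positivity : (0:ℝ) < 1 + t)]
    nlinarith [h5, h6]
  · rw [div_mul_eq_mul_div, le_div_iff₀ (by linarith : (0:ℝ) < 1 - t)]
    nlinarith [h5, h6]

theorem stmt_7 (h : ℂ → ℝ) (hharm : IsHarmonicOnDisk h)
    (hnonneg : ∀ z ∈ ball (0 : ℂ) 1, 0 ≤ h z)
    (hsym : ∀ z ∈ ball (0 : ℂ) 1, h ((starRingEnd ℂ) z) = h z)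
    (y : ℝ) (hy1 : -1 < y) (hy2 : y < 1) :
    (1 - y ^ 2) / (1 + y ^ 2) * h 0 ≤ h (Complex.I * y) ∧
      h (Complex.I * y) ≤ (1 + y ^ 2) / (1 - y ^ 2) * h 0 := by
  obtain ⟨F, hFd, hFre⟩ := hharm
  have h0mem : (0:ℂ) ∈ ball (0:ℂ) 1 := mem_ball_self one_pos
  have hyabs : |y| < 1 := abs_lt.2 ⟨hy1, hy2⟩
  have hwmem : (Complex.I * (y:ℂ)) ∈ ball (0:ℂ) 1 := by
    rw [mem_ball_zero_iff]
    simpa using hyabs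
  have hnegmem : ∀ z : ℂ, z ∈ ball (0:ℂ) 1 → -z ∈ ball (0:ℂ) 1 := by
    intro z hz
    rw [mem_ball_zero_iff] at hz ⊢
    simpa using hz
  set Φ : ℂ → ℂ := fun z => (F z + F (-z)) / 2 - ((F 0).im : ℂ) * Complex.I with hΦdef
  have hΦd : DifferentiableOn ℂ Φ (ball (0:ℂ) 1) := by
    apply DifferentiableOn.sub _ (differentiableOn_const _)
    apply DifferentiableOn.div_const
    exact hFd.add (hFd.comp (differentiable_neg.differentiableOn) (fun z hz => hnegmem z hz))
  have hΦeven : ∀ z, Φ (-z) = Φ z := by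
    intro z
    simp only [hΦdef, neg_neg]
    ring
  have hΦre : ∀ z ∈ ball (0:ℂ) 1, (Φ z).re = (h z + h (-z)) / 2 := by
    intro z hz
    have e : (Φ z).re = ((F z).re + (F (-z)).re) / 2 := by
      simp [hΦdef, Complex.div_ofNat_re, Complex.add_re]
    rw [e, ← hFre z hz, ← hFre (-z) (hnegmem z hz)]
  have hΦpos : ∀ z ∈ ball (0:ℂ) 1, 0 ≤ (Φ z).re := by
    intro z hz
    rw [hΦre z hz]
    have := hnonneg z hz
    have := hnonneg (-z) (hnegmem z hz)
    linarith
  set a : ℝ := h 0 with hadef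
  have ha : 0 ≤ a := hnonneg 0 h0mem
  have hΦ0 : Φ 0 = (a : ℂ) := by
    apply Complex.ext
    · have := hΦre 0 h0mem
      simpa [hadef] using this
    · simp [hΦdef, Complex.div_ofNat_im, Complex.add_im]
  set x : ℝ := h (Complex.I * (y:ℂ)) with hxdef
  have hx : 0 ≤ x := hnonneg _ hwmem
  have hconj : h (-(Complex.I * (y:ℂ))) = x := by
    have hc : (starRingEnd ℂ) (Complex.I * (y:ℂ)) = -(Complex.I * (y:ℂ)) := by
      simp [Complex.conj_ofReal]
    rw [← hc]
    exact hsym _ hwmem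
  have hΦw : (Φ (Complex.I * (y:ℂ))).re = x := by
    rw [hΦre _ hwmem, hconj, ← hxdef]
    ring
  set s : ℝ := (Φ (Complex.I * (y:ℂ))).im with hsdef
  have habs2 : ∀ ε : ℝ, 0 < ε →
      (x - a)^2 + s^2 ≤ y^4 * ((x + (a + 2*ε))^2 + s^2) := by
    intro ε hε
    have hmain := harnack_aux (Φ := fun z => Φ z + (ε:ℂ)) (A := a + ε)
      (hΦd.add (differentiableOn_const _))
      (fun z => by simp [hΦeven z])
      (fun z hz => by
        have := hΦpos z hz
        simp only [Complex.add_re, Complex.ofReal_re]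
        linarith)
      (by push_cast [hΦ0]; ring)
      (by linarith)
      hwmem
    have e1 : Φ (Complex.I * (y:ℂ)) + (ε:ℂ) - ((a + ε : ℝ):ℂ)
        = Φ (Complex.I * (y:ℂ)) - ((a:ℝ):ℂ) := by push_cast; ring
    have e2 : Φ (Complex.I * (y:ℂ)) + (ε:ℂ) + ((a + ε : ℝ):ℂ)
        = Φ (Complex.I * (y:ℂ)) + ((a + 2*ε : ℝ):ℂ) := by push_cast; ring
    have e3 : (‖Complex.I * (y:ℂ)‖)^2 = y^2 := by
      rw [norm_mul]
      simp [sq_abs]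
    rw [e1, e2, e3] at hmain
    have h2 := pow_le_pow_left₀ (norm_nonneg _) hmain 2
    rw [mul_pow, Complex.sq_norm, Complex.sq_norm, Complex.normSq_apply, Complex.normSq_apply] at h2
    simp only [Complex.sub_re, Complex.sub_im, Complex.add_re, Complex.add_im,
      Complex.ofReal_re, Complex.ofReal_im, hΦw, ← hsdef] at h2
    nlinarith [h2]
  have hfin : (x - a)^2 + s^2 ≤ y^4 * ((x + a)^2 + s^2) := by
    have hcont : Filter.Tendsto (fun ε : ℝ => y^4 * ((x + (a + 2*ε))^2 + s^2))
        (nhdsWithin 0 (Set.Ioi 0)) (nhds (y^4 * ((x + (a + 2*0))^2 + s^2))) :=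
      ((Continuous.tendsto (by continuity) 0)).mono_left nhdsWithin_le_nhds
    have := ge_of_tendsto hcont (eventually_nhdsWithin_of_forall (fun ε hε => habs2 ε hε))
    simpa using this
  have ht0 : (0:ℝ) ≤ y^2 := sq_nonneg y
  have ht1 : y^2 < 1 := by nlinarith [_root_.sq_abs y, hyabs, abs_nonneg y]
  have hfin' : (x - a)^2 + s^2 ≤ (y^2)^2 * ((x + a)^2 + s^2) := by
    calc (x - a)^2 + s^2 ≤ y^4 * ((x + a)^2 + s^2) := hfin
      _ = (y^2)^2 * ((x + a)^2 + s^2) := by ring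
  exact harnack_num hx ha ht0 ht1 hfin'
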